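/- Let k be algebraically closed of characteristic 0 (or ≠ 2), n = 2m even, G = GL_n(k). Let σ_s(g) = J·(gᵀ)⁻¹·J⁻¹ where J = t·J₀ with (J₀)_{ij} = δ_{i,n+1−j} and t = diag(1,…,1,−1,…,−1) (m ones then m minus-ones), and let σ_o(g) = J₀·(gᵀ)⁻¹·J₀⁻¹. Then the semidirect products G⋊⟨σ_s⟩ and G⋊⟨σ_o⟩ are not isomorphic: there exists no group isomorphism between them restricting to the identity (or any automorphism) on G. -/

import Mathlib

open SemidirectProduct Matrix
open scoped MatrixGroups
open Module

universe u v

lemma cs_aux {k : Type v} [Field k] (h2 : (2:k) ≠ 0) :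
    ∀ (N : ℕ) (V : Type u) [AddCommGroup V] [Module k V] [FiniteDimensional k V],
      finrank k V ≤ N →
      ∀ (ω : V →ₗ[k] V →ₗ[k] k), (∀ x, ω x x = 0) →
      (∀ x, (∀ y, ω x y = 0) → x = 0) →
      ∀ (aL : V →ₗ[k] V), (∀ x y, ω (aL x) (aL y) = ω x y) →
      (∀ x, aL (aL x) = x) →
      ∃ cL : V →ₗ[k] V, (∀ x y, ω (cL x) (cL y) = ω x y) ∧ (∀ x, cL (cL x) = aL x) := by
  intro N
  induction N with
  | zero =>
    intro V _ _ _ hrk ω halt hnd aL haω hainv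
    have : Subsingleton V := finrank_zero_iff.mp (Nat.le_zero.mp hrk)
    exact ⟨LinearMap.id, fun x y => rfl, fun x => Subsingleton.elim _ _⟩
  | succ N IH =>
    intro V _ _ _ hrk ω halt hnd aL haω hainv
    by_cases hid : ∀ x, aL x = x
    · exact ⟨LinearMap.id, fun x y => rfl, fun x => by simp [hid x]⟩
    push_neg at hid
    obtain ⟨v, hv⟩ := hid
    have hskew : ∀ x y, ω x y = - ω y x := by
      intro x y
      have h0 := halt (x + y)
      simp only [map_add, LinearMap.add_apply, halt x, halt y] at h0
      linear_combination h0
    set e := v - aL v with he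
    have he0 : e ≠ 0 := sub_ne_zero.mpr (Ne.symm hv)
    have haLe : aL e = -e := by
      rw [he, map_sub, hainv v]
      abel
    obtain ⟨f₀, hf₀⟩ : ∃ y, ω e y ≠ 0 := by
      by_contra h; push_neg at h; exact he0 (hnd e h)
    have hωaf : ω e (aL f₀) = - ω e f₀ := by
      have h1 := haω e f₀
      rw [haLe] at h1
      simp only [map_neg, LinearMap.neg_apply] at h1
      linear_combination -h1
    set f₁ := f₀ - aL f₀ with hf₁
    have hωef₁ : ω e f₁ = 2 * ω e f₀ := by
      rw [hf₁, map_sub, hωaf]; ring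
    have hf₁0 : ω e f₁ ≠ 0 := by rw [hωef₁]; exact mul_ne_zero h2 hf₀
    set f := (ω e f₁)⁻¹ • f₁ with hf
    have hωef : ω e f = 1 := by
      rw [hf, _root_.map_smul, smul_eq_mul, inv_mul_cancel₀ hf₁0]
    have haLf₁ : aL f₁ = -f₁ := by
      rw [hf₁, map_sub, hainv]; abel
    have haLf : aL f = -f := by
      rw [hf, _root_.map_smul, haLf₁, smul_neg]
    have hωfe : ω f e = -1 := by rw [hskew f e, hωef]
    have hωee : ω e e = 0 := halt e
    have hωff : ω f f = 0 := halt f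
    clear_value f f₁ e
    clear hf hf₁ he hωef₁ hf₁0 haLf₁ hωaf hf₀ hv
    set P := Submodule.span k ({e, f} : Set V) with hP
    set W := (LinearMap.ker (ω e)) ⊓ (LinearMap.ker (ω f)) with hW
    have hmemW : ∀ x, x ∈ W ↔ ω e x = 0 ∧ ω f x = 0 := by
      intro x
      simp [hW, Submodule.mem_inf, LinearMap.mem_ker]
    have heP : e ∈ P := Submodule.subset_span (by simp)
    have hfP : f ∈ P := Submodule.subset_span (by simp)
    have hdec : ∀ x : V, x - ((ω e x) • f - (ω f x) • e) ∈ W := by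
      intro x
      rw [hmemW]
      constructor
      · simp only [map_sub, _root_.map_smul, LinearMap.sub_apply, LinearMap.smul_apply, smul_eq_mul,
          hωef, hωee]
        ring
      · simp only [map_sub, _root_.map_smul, LinearMap.sub_apply, LinearMap.smul_apply, smul_eq_mul,
          hωff, hωfe]
        ring
    have hPmem : ∀ x : V, (ω e x) • f - (ω f x) • e ∈ P := fun x =>
      Submodule.sub_mem _ (Submodule.smul_mem _ _ hfP) (Submodule.smul_mem _ _ heP)
    have hcompl : IsCompl W P := by
      constructor
      · rw [Submodule.disjoint_def]
        intro x hxW hxP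
        obtain ⟨a, b, hab⟩ := Submodule.mem_span_pair.mp hxP
        rw [hmemW] at hxW
        have hb : ω e x = b := by
          rw [← hab]
          simp only [map_add, _root_.map_smul, LinearMap.add_apply, LinearMap.smul_apply, smul_eq_mul,
            hωee, hωef]
          ring
        have ha : ω f x = -a := by
          rw [← hab]
          simp only [map_add, _root_.map_smul, LinearMap.add_apply, LinearMap.smul_apply, smul_eq_mul,
            hωff, hωfe]
          ring
        have ha0 : a = 0 := by
          have h := hxW.2; rw [ha] at h; exact neg_eq_zero.mp h
        have hb0 : b = 0 := by rw [← hb]; exact hxW.1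
        rw [← hab, ha0, hb0]
        simp
      · rw [codisjoint_iff, eq_top_iff]
        intro x _
        rw [Submodule.mem_sup]
        exact ⟨_, hdec x, _, hPmem x, by abel⟩
    have haW : ∀ x ∈ W, aL x ∈ W := by
      intro x hx
      rw [hmemW] at hx ⊢
      constructor
      · have h1 := haω e x
        rw [haLe] at h1
        simp only [map_neg, LinearMap.neg_apply] at h1
        rw [hx.1] at h1
        linear_combination -h1
      · have h1 := haω f x
        rw [haLf] at h1
        simp only [map_neg, LinearMap.neg_apply] at h1
        rw [hx.2] at h1
        linear_combination -h1
    set prW := W.linearProjOfIsCompl P hcompl with hprW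
    have hproj : ∀ x : V, (prW x : V) = x - ((ω e x) • f - (ω f x) • e) := by
      intro x
      have hsplit : x = (x - ((ω e x) • f - (ω f x) • e)) + ((ω e x) • f - (ω f x) • e) := by abel
      have h1 : prW (((⟨x - ((ω e x) • f - (ω f x) • e), hdec x⟩ : W) : V)) =
          ⟨x - ((ω e x) • f - (ω f x) • e), hdec x⟩ :=
        Submodule.linearProjOfIsCompl_apply_left hcompl _
      have h2 : prW ((ω e x) • f - (ω f x) • e) = 0 :=
        Submodule.projectionOnto_apply_of_mem_right hcompl (hPmem x)
      calc (prW x : V) = (prW ((x - ((ω e x) • f - (ω f x) • e)) + ((ω e x) • f - (ω f x) • e)) : V) := by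
            rw [← hsplit]
        _ = ((prW (x - ((ω e x) • f - (ω f x) • e)) + prW ((ω e x) • f - (ω f x) • e) : W) : V) := by
            rw [map_add]
        _ = x - ((ω e x) • f - (ω f x) • e) := by
            rw [h2, add_zero]
            exact congrArg _ h1
    have hWmemcoe : ∀ w : W, ω e (w : V) = 0 ∧ ω f (w : V) = 0 := fun w => (hmemW _).mp w.2
    set a' : W →ₗ[k] W := aL.restrict haW with ha'
    set ω' : W →ₗ[k] W →ₗ[k] k := ω.compl₁₂ W.subtype W.subtype with hω'
    have hω'app : ∀ (x y : W), ω' x y = ω (x : V) (y : V) := fun x y => rfl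
    have hWlt : finrank k W ≤ N := by
      have hWne : W ≠ ⊤ := by
        intro hWt
        have : e ∈ W := by rw [hWt]; trivial
        have := ((hmemW e).mp this).2
        rw [hωfe] at this
        exact one_ne_zero (neg_eq_zero.mp this)
      have := Submodule.finrank_lt hWne
      omega
    have hnd' : ∀ x : W, (∀ y : W, ω' x y = 0) → x = 0 := by
      intro x hx
      have hxe : ω (x : V) e = 0 := by
        rw [hskew]; rw [(hWmemcoe x).1]; ring
      have hxf : ω (x : V) f = 0 := by
        rw [hskew]; rw [(hWmemcoe x).2]; ring
      have hxV : ∀ z : V, ω (x : V) z = 0 := by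
        intro z
        have h1 : ω (x : V) (z - ((ω e z) • f - (ω f z) • e)) = 0 := hx ⟨_, hdec z⟩
        rw [map_sub, map_sub, _root_.map_smul, _root_.map_smul, hxe, hxf] at h1
        simpa using h1
      exact Subtype.ext (hnd _ hxV)
    have ha'ω : ∀ x y : W, ω' (a' x) (a' y) = ω' x y := by
      intro x y
      rw [hω'app, hω'app, ha']
      rw [LinearMap.restrict_coe_apply, LinearMap.restrict_coe_apply]
      exact haω _ _
    have ha'sq : ∀ x : W, a' (a' x) = x := by
      intro x
      apply Subtype.ext
      rw [ha', LinearMap.restrict_coe_apply, LinearMap.restrict_coe_apply]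
      exact hainv _
    obtain ⟨c', hc'ω, hc'sq⟩ := IH W hWlt ω' (fun x => halt _) hnd' a' ha'ω ha'sq
    have hc'W : ∀ w : W, ω e ((c' w : V)) = 0 ∧ ω f ((c' w : V)) = 0 := fun w => hWmemcoe _
    set cL : V →ₗ[k] V :=
      (-(((ω f).smulRight f) + ((ω e).smulRight e))) + W.subtype ∘ₗ c' ∘ₗ prW with hcL
    have hcLapply : ∀ x, cL x = -((ω f x) • f + (ω e x) • e) + (c' (prW x) : V) := by
      intro x
      simp [hcL, LinearMap.smulRight_apply]
    clear_value cL prW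
    -- scalar values on cL x
    have hωecL : ∀ x, ω e (cL x) = -(ω f x) := by
      intro x
      rw [hcLapply]
      simp only [map_add, map_neg, _root_.map_smul, LinearMap.add_apply, LinearMap.neg_apply,
        LinearMap.smul_apply, smul_eq_mul, hωef, hωee, (hc'W (prW x)).1]
      ring
    have hωfcL : ∀ x, ω f (cL x) = ω e x := by
      intro x
      rw [hcLapply]
      simp only [map_add, map_neg, _root_.map_smul, LinearMap.add_apply, LinearMap.neg_apply,
        LinearMap.smul_apply, smul_eq_mul, hωff, hωfe, (hc'W (prW x)).2]
      ring
    have hprcL : ∀ x, prW (cL x) = c' (prW x) := by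
      intro x
      apply Subtype.ext
      rw [hproj, hωecL, hωfcL, hcLapply]
      module
    have hmaster : ∀ x y, ω x y =
        (ω e x) * (ω f y) - (ω f x) * (ω e y) + ω (prW x : V) (prW y : V) := by
      intro x y
      have hx : x = (prW x : V) + ((ω e x) • f - (ω f x) • e) := by rw [hproj]; abel
      have hy : y = (prW y : V) + ((ω e y) • f - (ω f y) • e) := by rw [hproj]; abel
      have hwe : ω (prW x : V) e = 0 := by rw [hskew, (hWmemcoe (prW x)).1]; ring
      have hwf : ω (prW x : V) f = 0 := by rw [hskew, (hWmemcoe (prW x)).2]; ring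
      conv_lhs => rw [hx, hy]
      simp only [map_add, map_sub, _root_.map_smul, LinearMap.add_apply, LinearMap.sub_apply,
        LinearMap.smul_apply, smul_eq_mul, hωee, hωff, hωef, hωfe, hwe, hwf,
        (hWmemcoe (prW y)).1, (hWmemcoe (prW y)).2]
      ring
    refine ⟨cL, ?_, ?_⟩
    · intro x y
      rw [hmaster (cL x) (cL y), hωecL, hωfcL, hωecL, hωfcL, hprcL, hprcL]
      have hcc : ω ((c' (prW x)) : V) ((c' (prW y)) : V) = ω (prW x : V) (prW y : V) := by
        have h3 := hc'ω (prW x) (prW y)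
        rwa [hω'app, hω'app] at h3
      rw [hcc, hmaster x y]
      ring
    · intro x
      have h1 : cL (cL x) = -((ω f (cL x)) • f + (ω e (cL x)) • e) + (c' (prW (cL x)) : V) :=
        hcLapply _
      rw [hωecL, hωfcL, hprcL, hc'sq] at h1
      have h2 : ((a' (prW x)) : V) = aL (prW x : V) := LinearMap.restrict_coe_apply _ _ _
      rw [h2, hproj] at h1
      rw [h1, map_sub, map_sub, _root_.map_smul, _root_.map_smul, haLe, haLf]
      simp only [smul_neg, neg_smul, neg_neg]
      abel


section MatLemmas
variable {k : Type*} [Field k] {n : Type*} [Fintype n] [DecidableEq n]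

lemma dot_ext {M N : Matrix n n k} (h : ∀ x y, x ⬝ᵥ (M *ᵥ y) = x ⬝ᵥ (N *ᵥ y)) : M = N := by
  ext i j
  have h1 := h (Pi.single i 1) (Pi.single j 1)
  rw [Matrix.mulVec_single_one, Matrix.mulVec_single_one, single_dotProduct,
    single_dotProduct, one_mul, one_mul] at h1
  exact h1

lemma mulVec_ext {M N : Matrix n n k} (h : ∀ x, M *ᵥ x = N *ᵥ x) : M = N := by
  ext i j
  have h1 := congrFun (h (Pi.single j 1)) i
  rw [Matrix.mulVec_single, Matrix.mulVec_single] at h1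
  simpa using h1

lemma hdotT (M : Matrix n n k) (x y : n → k) : (M *ᵥ x) ⬝ᵥ y = x ⬝ᵥ (Mᵀ *ᵥ y) := by
  rw [Matrix.dotProduct_mulVec, Matrix.vecMul_transpose, dotProduct_comm]

lemma vmv_mul (u v : n → k) (M : Matrix n n k) :
    Matrix.vecMulVec u v * M = Matrix.vecMulVec u (Matrix.vecMul v M) := by
  ext i j
  simp [Matrix.mul_apply, Matrix.vecMulVec_apply, Matrix.vecMul, dotProduct,
    Finset.mul_sum, mul_assoc]

lemma mul_vmv (M : Matrix n n k) (u v : n → k) :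
    M * Matrix.vecMulVec u v = Matrix.vecMulVec (M *ᵥ u) v := by
  ext i j
  simp only [Matrix.mul_apply, Matrix.vecMulVec_apply, Matrix.mulVec, dotProduct,
    Finset.sum_mul]
  exact Finset.sum_congr rfl fun b _ => by ring

lemma vmv_vmv (u v u' v' : n → k) :
    Matrix.vecMulVec u v * Matrix.vecMulVec u' v' = (v ⬝ᵥ u') • Matrix.vecMulVec u v' := by
  ext i j
  simp only [Matrix.mul_apply, Matrix.vecMulVec_apply, Matrix.smul_apply, dotProduct,
    Finset.sum_mul, smul_eq_mul, Finset.mul_sum]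
  exact Finset.sum_congr rfl fun b _ => by ring

lemma vmv_T (u v : n → k) : (Matrix.vecMulVec u v)ᵀ = Matrix.vecMulVec v u := by
  ext i j
  simp [Matrix.vecMulVec_apply, mul_comm]

lemma vmv_smul (a : k) (u v : n → k) :
    Matrix.vecMulVec (a • u) v = a • Matrix.vecMulVec u v := by
  ext i j
  simp [Matrix.vecMulVec_apply, mul_assoc]

lemma vmv_smul_right (a : k) (u v : n → k) :
    Matrix.vecMulVec u (a • v) = a • Matrix.vecMulVec u v := by
  ext i j
  simp [Matrix.vecMulVec_apply, mul_comm, mul_assoc, mul_left_comm]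

lemma vmv_neg (u v : n → k) : Matrix.vecMulVec (-u) v = -Matrix.vecMulVec u v := by
  ext i j
  simp [Matrix.vecMulVec_apply]

lemma refl_core (B : Matrix n n k) (v w : n → k) (c β : k)
    (hw : B *ᵥ v = w) (hvB : Matrix.vecMul v B = w) (hvw : v ⬝ᵥ w = β) (hcβ : c * β = 2) :
    ((1 - c • Matrix.vecMulVec w v) * B * (1 - c • Matrix.vecMulVec w v)ᵀ = B) ∧
    ((1 - c • Matrix.vecMulVec w v) * (1 - c • Matrix.vecMulVec w v) = 1) ∧
    ((1 - c • Matrix.vecMulVec w v).det = -1) := by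
  have hs : c * c * β = c + c := by rw [mul_assoc, hcβ, mul_two]
  refine ⟨?_, ?_, ?_⟩
  · rw [Matrix.transpose_sub, Matrix.transpose_one, Matrix.transpose_smul, vmv_T]
    rw [Matrix.sub_mul, Matrix.one_mul, Matrix.smul_mul, vmv_mul, hvB]
    rw [Matrix.mul_sub, Matrix.mul_one, Matrix.sub_mul, Matrix.mul_smul, mul_vmv, hw]
    rw [Matrix.smul_mul, Matrix.mul_smul, vmv_vmv, dotProduct_comm, hvw]
    rw [smul_smul, smul_smul, hs, add_smul]
    abel
  · rw [Matrix.sub_mul, Matrix.one_mul, Matrix.mul_sub, Matrix.mul_one]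
    rw [Matrix.smul_mul, Matrix.mul_smul, vmv_vmv, hvw]
    rw [smul_smul, smul_smul, hs, add_smul]
    abel
  · have hrw : (1 : Matrix n n k) - c • Matrix.vecMulVec w v
        = 1 + Matrix.replicateCol Unit (-(c • w)) * Matrix.replicateRow Unit v := by
      rw [← Matrix.vecMulVec_eq, vmv_neg, vmv_smul, sub_eq_add_neg]
    rw [hrw, Matrix.det_one_add_replicateCol_mul_replicateRow, dotProduct_neg, dotProduct_smul,
      smul_eq_mul, hvw, hcβ]
    norm_num

lemma reflection_exists [Nonempty n] (h2 : (2:k) ≠ 0) (B : Matrix n n k)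
    (hB : Bᵀ = B) (hBunit : IsUnit B) :
    ∃ r : Matrix n n k, r * B * rᵀ = B ∧ r * r = 1 ∧ r.det = -1 := by
  obtain ⟨v, hv⟩ : ∃ v : n → k, v ⬝ᵥ (B *ᵥ v) ≠ 0 := by
    by_contra hall
    push_neg at hall
    have hBsymdot : ∀ x y : n → k, y ⬝ᵥ (B *ᵥ x) = x ⬝ᵥ (B *ᵥ y) := by
      intro x y
      rw [dotProduct_comm, hdotT, hB]
    have hzero : ∀ x y : n → k, x ⬝ᵥ (B *ᵥ y) = 0 := by
      intro x y
      have h0 := hall (x + y)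
      rw [Matrix.mulVec_add, add_dotProduct, dotProduct_add,
        dotProduct_add, hall x, hall y] at h0
      have hsum : x ⬝ᵥ (B *ᵥ y) + y ⬝ᵥ (B *ᵥ x) = 0 := by linear_combination h0
      have h2x : (2:k) * (x ⬝ᵥ (B *ᵥ y)) = 0 := by
        linear_combination hsum - hBsymdot x y
      exact (mul_eq_zero.mp h2x).resolve_left h2
    have hB0 : B = 0 := dot_ext (fun x y => by
      rw [hzero x y, Matrix.zero_mulVec, dotProduct_zero])
    exact hBunit.ne_zero hB0
  have hvB : Matrix.vecMul v B = B *ᵥ v := by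
    rw [← hB, Matrix.vecMul_transpose, hB]
  obtain ⟨h1, h2', h3⟩ := refl_core B v (B *ᵥ v) (2 * (v ⬝ᵥ (B *ᵥ v))⁻¹) (v ⬝ᵥ (B *ᵥ v))
    rfl hvB rfl (by field_simp)
  exact ⟨_, h1, h2', h3⟩
end MatLemmas



lemma sympl_sqrt {k : Type*} [Field k] {n : Type*} [Fintype n] [DecidableEq n]
    (h2 : (2:k) ≠ 0) (J : Matrix n n k) (hJT : Jᵀ = -J) (hJJ : J * J = -1)
    (a : Matrix n n k) (haJ : aᵀ * J * a = J) (ha2 : a * a = 1) :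
    ∃ c : Matrix n n k, cᵀ * J * c = J ∧ c * c = a := by
  classical
  set ω : (n → k) →ₗ[k] (n → k) →ₗ[k] k := LinearMap.mk₂ k (fun x y => x ⬝ᵥ (J *ᵥ y))
    (fun x x' y => by simp [add_dotProduct])
    (fun r x y => by simp [smul_dotProduct])
    (fun x y y' => by simp [Matrix.mulVec_add, dotProduct_add])
    (fun r x y => by simp [Matrix.mulVec_smul, dotProduct_smul]) with hω
  have hωapp : ∀ x y, ω x y = x ⬝ᵥ (J *ᵥ y) := fun x y => rfl
  have halt : ∀ x, ω x x = 0 := by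
    intro x
    have h1 : (J *ᵥ x) ⬝ᵥ x = x ⬝ᵥ (Jᵀ *ᵥ x) := hdotT J x x
    rw [hJT, Matrix.neg_mulVec, dotProduct_neg, dotProduct_comm] at h1
    have h2' : (2:k) * (x ⬝ᵥ (J *ᵥ x)) = 0 := by linear_combination h1
    rw [hωapp]
    exact (mul_eq_zero.mp h2').resolve_left h2
  have hnd : ∀ x, (∀ y, ω x y = 0) → x = 0 := by
    intro x hx
    have hxJ : Matrix.vecMul x J = 0 := by
      funext j
      have h1 := hx (Pi.single j 1)
      rw [hωapp, Matrix.dotProduct_mulVec, dotProduct_single, mul_one] at h1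
      exact h1
    calc x = Matrix.vecMul x 1 := (Matrix.vecMul_one x).symm
      _ = Matrix.vecMul x (J * (-J)) := by rw [Matrix.mul_neg, hJJ, neg_neg]
      _ = Matrix.vecMul (Matrix.vecMul x J) (-J) := by rw [Matrix.vecMul_vecMul]
      _ = 0 := by rw [hxJ, Matrix.zero_vecMul]
  have haω : ∀ x y, ω (a.mulVecLin x) (a.mulVecLin y) = ω x y := by
    intro x y
    rw [hωapp, hωapp, Matrix.mulVecLin_apply, Matrix.mulVecLin_apply, hdotT,
      Matrix.mulVec_mulVec, Matrix.mulVec_mulVec, haJ]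
  have hainv : ∀ x, a.mulVecLin (a.mulVecLin x) = x := by
    intro x
    rw [Matrix.mulVecLin_apply, Matrix.mulVecLin_apply, Matrix.mulVec_mulVec, ha2,
      Matrix.one_mulVec]
  obtain ⟨cL, hcω, hcsq⟩ := cs_aux h2 (Module.finrank k (n → k)) (n → k) le_rfl ω halt hnd
    a.mulVecLin haω hainv
  set c := LinearMap.toMatrix' cL with hcdef
  have hcv : ∀ x, c *ᵥ x = cL x := by
    intro x
    rw [hcdef, ← Matrix.toLin'_apply, Matrix.toLin'_toMatrix']
  refine ⟨c, ?_, ?_⟩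
  · apply dot_ext
    intro x y
    have h1 := hcω x y
    rw [hωapp, hωapp, ← hcv, ← hcv, hdotT, Matrix.mulVec_mulVec, Matrix.mulVec_mulVec] at h1
    exact h1
  · apply mulVec_ext
    intro x
    rw [← Matrix.mulVec_mulVec, hcv, hcv, hcsq, Matrix.mulVecLin_apply]

/-- The antidiagonal permutation matrix `J₀`, `(J₀)_{ij} = δ_{i, n+1-j}`. -/
def J0 (k : Type*) [Field k] (m : ℕ) : Matrix (Fin (2 * m)) (Fin (2 * m)) k :=
  Matrix.of fun i j => if j = Fin.rev i then 1 else 0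

/-- The diagonal matrix `t = diag(1, …, 1, −1, …, −1)` with `m` ones and `m` minus ones. -/
def tMat (k : Type*) [Field k] (m : ℕ) : Matrix (Fin (2 * m)) (Fin (2 * m)) k :=
  Matrix.diagonal fun i => if (i : ℕ) < m then (1 : k) else -1

section Jlem
variable (k : Type*) [Field k] (m : ℕ)

lemma J0_mul_J0 : J0 k m * J0 k m = 1 := by
  ext i j
  rw [Matrix.mul_apply, Matrix.one_apply]
  simp only [J0, Matrix.of_apply]
  rw [Finset.sum_eq_single (Fin.rev i)]
  · rw [if_pos rfl, one_mul, Fin.rev_rev]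
    by_cases h : i = j
    · rw [if_pos h.symm, if_pos h]
    · rw [if_neg (fun hc => h hc.symm), if_neg h]
  · intro b _ hb
    rw [if_neg hb, zero_mul]
  · intro hmem
    exact absurd (Finset.mem_univ _) hmem

lemma J0_transpose : (J0 k m)ᵀ = J0 k m := by
  ext i j
  rw [Matrix.transpose_apply]
  simp only [J0, Matrix.of_apply]
  by_cases h : j = Fin.rev i
  · rw [if_pos h, if_pos (by rw [h, Fin.rev_rev])]
  · rw [if_neg h, if_neg (fun hc => h (by rw [hc, Fin.rev_rev]))]

lemma tfun_rev (i : Fin (2*m)) :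
    (if ((Fin.rev i : Fin (2*m)) : ℕ) < m then (1:k) else -1)
      = -(if (i:ℕ) < m then (1:k) else -1) := by
  have hi := i.isLt
  rw [Fin.val_rev]
  by_cases h : (i:ℕ) < m
  · rw [if_pos h, if_neg (by omega)]
  · rw [if_neg h, if_pos (by omega), neg_neg]

lemma Jm_apply (i j : Fin (2*m)) : (tMat k m * J0 k m) i j
    = (if (i:ℕ) < m then (1:k) else -1) * (if j = Fin.rev i then 1 else 0) := by
  rw [tMat, Matrix.diagonal_mul]
  rfl

lemma JmT : (tMat k m * J0 k m)ᵀ = -(tMat k m * J0 k m) := by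
  ext i j
  rw [Matrix.transpose_apply, Matrix.neg_apply, Jm_apply, Jm_apply]
  by_cases h : j = Fin.rev i
  · have h2 : i = Fin.rev j := by rw [h, Fin.rev_rev]
    rw [if_pos h2, if_pos h, h, tfun_rev]
    ring
  · have h2 : ¬ i = Fin.rev j := fun hc => h (by rw [hc, Fin.rev_rev])
    rw [if_neg h2, if_neg h]
    ring

lemma JmJm : (tMat k m * J0 k m) * (tMat k m * J0 k m) = -1 := by
  ext i j
  rw [Matrix.mul_apply, Matrix.neg_apply, Matrix.one_apply]
  rw [Finset.sum_eq_single (Fin.rev i)]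
  · rw [Jm_apply, Jm_apply, if_pos rfl, Fin.rev_rev, tfun_rev]
    by_cases h : j = i
    · rw [if_pos h, if_pos (show i = j from h.symm)]
      by_cases him : (i:ℕ) < m <;> simp [him]
    · rw [if_neg h, if_neg (show ¬ i = j from fun hc => h hc.symm)]
      simp
  · intro b _ hb
    rw [Jm_apply, if_neg hb, mul_zero, zero_mul]
  · intro hmem
    exact absurd (Finset.mem_univ _) hmem

end Jlem

/-- for `G = GL_{2m}(k)`, `σ_s g = J (gᵀ)⁻¹ J⁻¹` with `J = t * J₀`
(symplectic type) and `σ_o g = J₀ (gᵀ)⁻¹ J₀⁻¹` (orthogonal type), the semidirect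
products `G⋊⟨σ_s⟩` and `G⋊⟨σ_o⟩` are not isomorphic via any isomorphism restricting to
an automorphism (in particular the identity) of `G`. -/
theorem stmt13 {k : Type*} [Field k] [IsAlgClosed k] (hchar : (2 : k) ≠ 0)
    (m : ℕ) (hm : 0 < m)
    (σs σo : MulAut (GL (Fin (2 * m)) k))
    (hσs : ∀ g : GL (Fin (2 * m)) k,
      ((σs g : GL (Fin (2 * m)) k) : Matrix (Fin (2 * m)) (Fin (2 * m)) k)
        = (tMat k m * J0 k m) *
            (((g⁻¹ : GL (Fin (2 * m)) k) : Matrix (Fin (2 * m)) (Fin (2 * m)) k))ᵀ *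
            (tMat k m * J0 k m)⁻¹)
    (hσo : ∀ g : GL (Fin (2 * m)) k,
      ((σo g : GL (Fin (2 * m)) k) : Matrix (Fin (2 * m)) (Fin (2 * m)) k)
        = J0 k m *
            (((g⁻¹ : GL (Fin (2 * m)) k) : Matrix (Fin (2 * m)) (Fin (2 * m)) k))ᵀ *
            (J0 k m)⁻¹)
    (ψs ψo : Multiplicative (ZMod 2) →* MulAut (GL (Fin (2 * m)) k))
    (hψs : ψs (Multiplicative.ofAdd 1) = σs)
    (hψo : ψo (Multiplicative.ofAdd 1) = σo) :
    ¬ ∃ (e : (GL (Fin (2 * m)) k ⋊[ψs] Multiplicative (ZMod 2)) ≃*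
             (GL (Fin (2 * m)) k ⋊[ψo] Multiplicative (ZMod 2)))
        (φ : GL (Fin (2 * m)) k ≃* GL (Fin (2 * m)) k),
        ∀ g : GL (Fin (2 * m)) k, e (inl g) = inl (φ g) := by
  rintro ⟨e, φ, hφ⟩
  classical
  have hNE : Nonempty (Fin (2*m)) := ⟨⟨0, by omega⟩⟩
  have hJ0J0 := J0_mul_J0 k m
  have hJ0T := J0_transpose k m
  have hJmT := JmT k m
  have hJmJm := JmJm k m
  have hJ0inv : (J0 k m)⁻¹ = J0 k m := Matrix.inv_eq_right_inv hJ0J0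
  have hJminv : (tMat k m * J0 k m)⁻¹ = -(tMat k m * J0 k m) :=
    Matrix.inv_eq_right_inv (by rw [Matrix.mul_neg, hJmJm, neg_neg])
  set J0' := J0 k m with hJ0'def
  set Jm := tMat k m * J0' with hJmdef
  -- group-level bookkeeping
  set gen : Multiplicative (ZMod 2) := Multiplicative.ofAdd 1 with hgendef
  have hg2 : gen * gen = 1 := by decide
  have hgenne : gen ≠ 1 := by decide
  have hcases : ∀ z : Multiplicative (ZMod 2), z = 1 ∨ z = gen := by decide
  set u := e (inr gen) with hudef
  set Y := u.left with hYdef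
  have hur : u.right = gen := by
    obtain ⟨x, hx⟩ := e.surjective (inr gen)
    have h1 : (e x).right = (e (inr x.right)).right := by
      conv_lhs => rw [← inl_left_mul_inr_right x]
      rw [_root_.map_mul, mul_right, hφ, right_inl, one_mul]
    rw [hx, right_inr] at h1
    rcases hcases x.right with h | h
    · exfalso
      rw [h, show (inr (1 : Multiplicative (ZMod 2)) : _ ⋊[ψs] _) = 1 from _root_.map_one inr,
        _root_.map_one, one_right] at h1
      exact hgenne h1
    · rw [h] at h1
      exact h1.symm
  have huu : u * u = 1 := by
    rw [hudef, ← _root_.map_mul, ← _root_.map_mul, hg2, _root_.map_one, _root_.map_one]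
  have hYσoY : Y * σo Y = 1 := by
    have h1 := congrArg SemidirectProduct.left huu
    rw [mul_left, hur, hψo, one_left] at h1
    exact h1
  have hσoYinv : σo Y = Y⁻¹ := eq_inv_of_mul_eq_one_right hYσoY
  have hconj : ∀ g : GL (Fin (2*m)) k,
      (inr gen : _ ⋊[ψs] _) * inl g * inr gen = inl (σs g) := by
    intro g
    ext
    · simp [mul_left, mul_right, left_inl, right_inl, left_inr, right_inr, hψs, hg2]
    · simp [mul_right, right_inl, right_inr, hg2]
  have hrel : ∀ g, φ (σs g) = Y * σo (φ g) * Y⁻¹ := by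
    intro g
    have h1 := congrArg e (hconj g)
    rw [_root_.map_mul, _root_.map_mul, hφ, hφ] at h1
    have h2 := congrArg SemidirectProduct.left h1
    rw [mul_left, mul_left, mul_right, hur, right_inl, mul_one, hψo, left_inl, left_inl] at h2
    rw [hσoYinv] at h2
    rw [← h2, mul_assoc]
  -- matrix-level facts about Y
  set y : Matrix (Fin (2*m)) (Fin (2*m)) k := (Y : Matrix (Fin (2*m)) (Fin (2*m)) k) with hydef
  set y' : Matrix (Fin (2*m)) (Fin (2*m)) k :=
    ((Y⁻¹ : GL (Fin (2*m)) k) : Matrix (Fin (2*m)) (Fin (2*m)) k) with hy'def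
  have hyy' : y * y' = 1 := Y.mul_inv
  have hy'y : y' * y = 1 := Y.inv_mul
  have h1v : y * (J0' * y'ᵀ * J0') = 1 := by
    have h1 := congrArg Units.val hYσoY
    rw [Units.val_mul, Units.val_one, hσo Y, hJ0inv] at h1
    exact h1
  have hyJ0y'T : y * (J0' * y'ᵀ) = J0' := by
    have h2 : y * (J0' * y'ᵀ * J0') * J0' = J0' := by rw [h1v, one_mul]
    simp only [mul_assoc] at h2
    rw [hJ0J0, mul_one] at h2
    exact h2
  have hy'TyT : y'ᵀ * yᵀ = 1 := by rw [← Matrix.transpose_mul, hyy', Matrix.transpose_one]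
  have hyJ0 : y * J0' = J0' * yᵀ := by
    calc y * J0' = y * J0' * (y'ᵀ * yᵀ) := by rw [hy'TyT, mul_one]
      _ = (y * (J0' * y'ᵀ)) * yᵀ := by simp only [mul_assoc]
      _ = J0' * yᵀ := by rw [hyJ0y'T]
  have hBsym : (y * J0')ᵀ = y * J0' := by
    rw [Matrix.transpose_mul, hJ0T, ← hyJ0]
  have hBunit : IsUnit (y * J0') := (Units.isUnit Y).mul ⟨⟨J0', J0', hJ0J0, hJ0J0⟩, rfl⟩
  -- the reflection
  obtain ⟨r, hrB, hr2, hrdet⟩ := reflection_exists hchar (y * J0') hBsym hBunit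
  set R : GL (Fin (2*m)) k := ⟨r, r, hr2, hr2⟩ with hRdef
  have hRval : (R : Matrix (Fin (2*m)) (Fin (2*m)) k) = r := rfl
  have hRinvval : ((R⁻¹ : GL (Fin (2*m)) k) : Matrix (Fin (2*m)) (Fin (2*m)) k) = r := rfl
  have hBrT : (y * J0') * rᵀ = r * (y * J0') := by
    have h2 : r * (r * (y * J0') * rᵀ) = r * (y * J0') := by rw [hrB]
    calc (y * J0') * rᵀ = (r * r) * ((y * J0') * rᵀ) := by rw [hr2, one_mul]
      _ = r * (r * (y * J0') * rᵀ) := by simp only [mul_assoc]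
      _ = r * (y * J0') := h2
  have hθR : Y * σo R * Y⁻¹ = R := by
    refine Units.ext ?_
    rw [Units.val_mul, Units.val_mul, hσo R, hRinvval, hJ0inv, hRval]
    calc y * (J0' * rᵀ * J0') * y' = (y * J0') * rᵀ * (J0' * y') := by
          simp only [mul_assoc]
      _ = r * (y * J0') * (J0' * y') := by rw [hBrT]
      _ = r * (y * (J0' * J0') * y') := by simp only [mul_assoc]
      _ = r := by rw [hJ0J0, mul_one, hyy', mul_one]
  -- pull back to an involution fixed by σs
  set A := φ.symm R with hAdef
  have hφA : φ A = R := φ.apply_symm_apply R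
  have hσsA : σs A = A := by
    have h1 := hrel A
    rw [hφA, hθR] at h1
    exact φ.injective (by rw [h1, hφA])
  have hR2 : R * R = 1 := Units.ext (by rw [Units.val_mul, hRval, hr2, Units.val_one])
  have hA2 : A * A = 1 := by
    rw [hAdef, ← _root_.map_mul, hR2, _root_.map_one]
  have hAinv : A⁻¹ = A := inv_eq_of_mul_eq_one_right hA2
  set a : Matrix (Fin (2*m)) (Fin (2*m)) k := (A : Matrix (Fin (2*m)) (Fin (2*m)) k) with hadef
  have haa : a * a = 1 := by rw [hadef, ← Units.val_mul, hA2, Units.val_one]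
  have hσsAval : -(Jm * aᵀ * Jm) = a := by
    have h1 := congrArg Units.val hσsA
    rw [hσs A, hJminv, hAinv, Matrix.mul_neg] at h1
    exact h1
  have haTaT : aᵀ * aᵀ = 1 := by rw [← Matrix.transpose_mul, haa, Matrix.transpose_one]
  have haJa : aᵀ * Jm * a = Jm := by
    nth_rewrite 2 [← hσsAval]
    calc aᵀ * Jm * -(Jm * aᵀ * Jm) = -(aᵀ * ((Jm * Jm) * (aᵀ * Jm))) := by
          rw [Matrix.mul_neg]
          simp only [mul_assoc]
      _ = aᵀ * aᵀ * Jm := by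
          rw [hJmJm, neg_one_mul, Matrix.mul_neg, neg_neg, ← mul_assoc]
      _ = Jm := by rw [haTaT, one_mul]
  -- the symplectic square root
  obtain ⟨c, hcJc, hcc⟩ := sympl_sqrt hchar Jm hJmT hJmJm a haJa haa
  have hac : a * c = c * a := by
    rw [← hcc, mul_assoc]
  have hC1 : c * (c * a) = 1 := by rw [← mul_assoc, hcc, haa]
  have hC2 : (c * a) * c = 1 := by rw [mul_assoc, hac, ← mul_assoc, hcc, haa]
  set C : GL (Fin (2*m)) k := ⟨c, c * a, hC1, hC2⟩ with hCdef
  have hCval : (C : Matrix (Fin (2*m)) (Fin (2*m)) k) = c := rfl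
  have hCinvval : ((C⁻¹ : GL (Fin (2*m)) k) : Matrix (Fin (2*m)) (Fin (2*m)) k) = c * a := rfl
  have hCC : C * C = A := Units.ext (by rw [Units.val_mul, hCval, hcc, hadef])
  have hcTJm : cᵀ * Jm = Jm * (c * a) := by
    calc cᵀ * Jm = cᵀ * Jm * (c * (c * a)) := by rw [hC1, mul_one]
      _ = (cᵀ * Jm * c) * (c * a) := by simp only [mul_assoc]
      _ = Jm * (c * a) := by rw [hcJc]
  have hJmc : Jm * c = (c * a)ᵀ * Jm := by
    have h1 := congrArg Matrix.transpose hcTJm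
    rw [Matrix.transpose_mul cᵀ Jm, Matrix.transpose_mul Jm (c * a),
      Matrix.transpose_transpose, hJmT, Matrix.neg_mul, Matrix.mul_neg] at h1
    exact neg_inj.mp h1
  have hcaT : (c * a)ᵀ = -(Jm * c * Jm) := by
    have h1 : Jm * c * Jm = (c * a)ᵀ * Jm * Jm := by rw [hJmc]
    rw [mul_assoc ((c * a)ᵀ), hJmJm, mul_neg_one] at h1
    rw [h1, neg_neg]
  have hσsC : σs C = C := Units.ext (by
    rw [hσs C, hCinvval, hJminv, hCval, hcaT]
    simp only [Matrix.mul_neg, Matrix.neg_mul, neg_neg]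
    calc Jm * (Jm * c * Jm) * Jm = (Jm * Jm) * (c * (Jm * Jm)) := by simp only [mul_assoc]
      _ = c := by rw [hJmJm, mul_neg_one, neg_one_mul, neg_neg])
  -- transport through φ and compute determinants
  set D := φ C with hDdef
  have hθD : Y * σo D * Y⁻¹ = D := by
    have h1 := hrel C
    rw [hσsC] at h1
    exact h1.symm
  set d : Matrix (Fin (2*m)) (Fin (2*m)) k := (D : Matrix (Fin (2*m)) (Fin (2*m)) k) with hddef
  set d' : Matrix (Fin (2*m)) (Fin (2*m)) k :=
    ((D⁻¹ : GL (Fin (2*m)) k) : Matrix (Fin (2*m)) (Fin (2*m)) k) with hd'def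
  have hdd' : d * d' = 1 := D.mul_inv
  have hθDval : y * (J0' * d'ᵀ * J0') * y' = d := by
    have h1 := congrArg Units.val hθD
    rw [Units.val_mul, Units.val_mul, hσo D, hJ0inv] at h1
    exact h1
  have hdB : d * (y * J0') = (y * J0') * d'ᵀ := by
    calc d * (y * J0') = (y * (J0' * d'ᵀ * J0') * y') * (y * J0') := by rw [hθDval]
      _ = y * (J0' * (d'ᵀ * (J0' * ((y' * y) * J0')))) := by simp only [mul_assoc]
      _ = (y * J0') * d'ᵀ := by rw [hy'y, one_mul, hJ0J0, mul_one, ← mul_assoc]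
  have hdBd : d * (y * J0') * dᵀ = y * J0' := by
    rw [hdB, mul_assoc, ← Matrix.transpose_mul, hdd', Matrix.transpose_one, mul_one]
  have hdetB : Matrix.det (y * J0') ≠ 0 :=
    ((Matrix.isUnit_iff_isUnit_det _).mp hBunit).ne_zero
  have hdet1 : d.det * d.det = 1 := by
    have h1 := congrArg Matrix.det hdBd
    rw [Matrix.det_mul, Matrix.det_mul, Matrix.det_transpose] at h1
    have h2 : (d.det * d.det) * (y * J0').det = 1 * (y * J0').det := by
      rw [one_mul]; linear_combination h1
    exact mul_right_cancel₀ hdetB h2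
  have hDD : D * D = R := by rw [hDdef, ← _root_.map_mul, hCC, hφA]
  have h1 : Matrix.det ((D * D : GL (Fin (2*m)) k) : Matrix (Fin (2*m)) (Fin (2*m)) k)
      = r.det := by rw [hDD, hRval]
  rw [Units.val_mul, Matrix.det_mul, hdet1, hrdet] at h1
  exact hchar (by linear_combination h1)
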